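/- Tail bound for the two-dimensional Gaussian-kernel truncation: for a Hermitian matrix H with eigenvalues E_n, a real a with a⁻ = min_n |a − E_n| > 0, and truncation parameters q_max, y_max > 0, the operator-norm truncation error of restricting the double integral (1/π)∫₀^∞∫_{-∞}^∞ e^{-y²/2} e^{iy(a-H)q} dy dq to [0, q_max] × [-y_max, y_max] is at most (1/a⁻)·erfc(a⁻ q_max/2) + (√2 q_max/√π)·erfc(y_max/√2). -/

import Mathlib

open MeasureTheory Complex

noncomputable section

abbrev Op (N : ℕ) := EuclideanSpace ℂ (Fin N) →L[ℂ] EuclideanSpace ℂ (Fin N)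

/-- The complementary error function `erfc x = (2/√π) ∫ₓ^∞ e^{-t²} dt`. -/
def erfc (x : ℝ) : ℝ := (2 / Real.sqrt Real.pi) * ∫ t in Set.Ioi x, Real.exp (-t ^ 2)

set_option synthInstance.maxHeartbeats 1000000
set_option maxHeartbeats 1000000

variable {N : ℕ}

/-- Diagonal operator in the basis `v` with entries `c`. -/
def diagOp (v : OrthonormalBasis (Fin N) ℂ (EuclideanSpace ℂ (Fin N))) (c : Fin N → ℂ) : Op N :=
  ∑ n, c n • ((innerSL ℂ (v n)).smulRight (v n))

lemma diagOp_apply_basis (v : OrthonormalBasis (Fin N) ℂ (EuclideanSpace ℂ (Fin N)))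
    (c : Fin N → ℂ) (m : Fin N) : diagOp v c (v m) = c m • v m := by
  simp only [diagOp, ContinuousLinearMap.sum_apply, ContinuousLinearMap.smul_apply,
    ContinuousLinearMap.smulRight_apply, innerSL_apply_apply]
  rw [Finset.sum_eq_single m]
  · simp [orthonormal_iff_ite.mp v.orthonormal]
  · intro n _ hnm
    simp [orthonormal_iff_ite.mp v.orthonormal, hnm]
  · simp

lemma diagOp_eq_sum (v : OrthonormalBasis (Fin N) ℂ (EuclideanSpace ℂ (Fin N)))
    (c : Fin N → ℂ) (x : EuclideanSpace ℂ (Fin N)) :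
    diagOp v c x = ∑ n, (c n * (inner ℂ (v n) x : ℂ)) • v n := by
  simp [diagOp, ContinuousLinearMap.sum_apply, mul_smul]

lemma diagOp_apply (v : OrthonormalBasis (Fin N) ℂ (EuclideanSpace ℂ (Fin N)))
    (c : Fin N → ℂ) (x : EuclideanSpace ℂ (Fin N)) (m : Fin N) :
    v.repr (diagOp v c x) m = c m * v.repr x m := by
  rw [diagOp_eq_sum, map_sum]
  have : ∀ n, v.repr ((c n * (inner ℂ (v n) x : ℂ)) • v n) = (c n * v.repr x n) • v.repr (v n) := by
    intro n
    rw [LinearIsometryEquiv.map_smul, v.repr_apply_apply]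
  simp only [this, v.repr_self]
  rw [WithLp.ofLp_sum, Finset.sum_apply]
  simp only [PiLp.smul_apply, EuclideanSpace.single_apply, smul_eq_mul, mul_ite, mul_one, mul_zero]
  simp [Finset.sum_ite_eq]

lemma diagOp_norm_le (v : OrthonormalBasis (Fin N) ℂ (EuclideanSpace ℂ (Fin N)))
    (c : Fin N → ℂ) {C : ℝ} (hC : 0 ≤ C) (h : ∀ n, ‖c n‖ ≤ C) : ‖diagOp v c‖ ≤ C := by
  refine ContinuousLinearMap.opNorm_le_bound _ hC fun x => ?_
  have h1 : ‖diagOp v c x‖ = ‖v.repr (diagOp v c x)‖ := (v.repr.norm_map _).symm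
  have h2 : ‖x‖ = ‖v.repr x‖ := (v.repr.norm_map _).symm
  rw [h1, h2, EuclideanSpace.norm_eq, EuclideanSpace.norm_eq]
  calc Real.sqrt (∑ i, ‖v.repr (diagOp v c x) i‖ ^ 2)
      ≤ Real.sqrt (C ^ 2 * ∑ i, ‖v.repr x i‖ ^ 2) := by
        apply Real.sqrt_le_sqrt
        rw [Finset.mul_sum]
        apply Finset.sum_le_sum
        intro i _
        rw [diagOp_apply, norm_mul, mul_pow]
        exact mul_le_mul_of_nonneg_right (pow_le_pow_left₀ (norm_nonneg _) (h i) 2)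
          (by positivity)
    _ = C * Real.sqrt (∑ i, ‖v.repr x i‖ ^ 2) := by
        rw [Real.sqrt_mul (sq_nonneg C), Real.sqrt_sq hC]

set_option maxHeartbeats 1000000 in
lemma exp_apply_eigen (T : Op N) (w : EuclideanSpace ℂ (Fin N)) (μ : ℂ) (h : T w = μ • w) :
    NormedSpace.exp T w = Complex.exp μ • w := by
  have hpow : ∀ k : ℕ, (T ^ k) w = μ ^ k • w := by
    intro k
    induction k with
    | zero => simp
    | succ k ih =>
      rw [pow_succ, ContinuousLinearMap.mul_apply, h, _root_.map_smul, ih, smul_smul, mul_comm]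
      rw [pow_succ]
  have happ : NormedSpace.exp T w =
      ∑' n : ℕ, ((n.factorial⁻¹ : ℂ) • T ^ n) w := by
    rw [NormedSpace.exp_eq_tsum ℂ]
    exact ContinuousLinearMap.map_tsum (ContinuousLinearMap.apply ℂ _ w)
      (NormedSpace.expSeries_summable' T)
  rw [happ]
  have : ∀ n : ℕ, ((n.factorial⁻¹ : ℂ) • T ^ n) w = ((n.factorial⁻¹ : ℂ) * μ ^ n) • w := by
    intro n
    rw [ContinuousLinearMap.smul_apply, hpow, smul_smul]
  rw [tsum_congr this, Summable.tsum_smul_const]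
  · congr 1
    rw [Complex.exp_eq_exp_ℂ, NormedSpace.exp_eq_tsum ℂ]
    simp [smul_eq_mul]
  · have := NormedSpace.expSeries_summable' (𝕂 := ℂ) μ
    simpa [smul_eq_mul] using this

lemma op_ext (v : OrthonormalBasis (Fin N) ℂ (EuclideanSpace ℂ (Fin N))) (T S : Op N)
    (h : ∀ n, T (v n) = S (v n)) : T = S := by
  apply ContinuousLinearMap.coe_injective
  apply v.toBasis.ext
  intro n
  simpa using h n

set_option maxHeartbeats 1000000 in
lemma exp_eq_diag (v : OrthonormalBasis (Fin N) ℂ (EuclideanSpace ℂ (Fin N)))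
    (A : Op N) (E : Fin N → ℝ) (hv : ∀ n, A (v n) = (E n : ℂ) • v n) (a : ℝ) (z : ℂ) :
    NormedSpace.exp (z • ((a : ℂ) • (1 : Op N) - A)) =
      diagOp v (fun n => Complex.exp (z * ((a : ℝ) - E n))) := by
  apply op_ext v
  intro n
  rw [diagOp_apply_basis]
  apply exp_apply_eigen
  rw [ContinuousLinearMap.smul_apply, ContinuousLinearMap.sub_apply,
    ContinuousLinearMap.smul_apply, ContinuousLinearMap.one_apply, hv,
    ← sub_smul, smul_smul]

lemma integrable_gauss_mul (t : ℝ) :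
    Integrable fun y : ℝ => (Real.exp (-y ^ 2 / 2) : ℂ) * Complex.exp (I * y * t) := by
  have h := integrable_cexp_quadratic (b := (1/2 : ℂ)) (by norm_num) (I * t) 0
  have heq : (fun y : ℝ => (Real.exp (-y ^ 2 / 2) : ℂ) * Complex.exp (I * y * t)) =
      fun y : ℝ => cexp (-(1/2 : ℂ) * y ^ 2 + (I * t) * y + 0) := by
    funext y
    rw [Complex.ofReal_exp, ← Complex.exp_add]
    congr 1
    push_cast
    ring
  rw [heq]
  exact h

lemma gauss_scalar (t : ℝ) :
    ∫ y : ℝ, (Real.exp (-y ^ 2 / 2) : ℂ) * Complex.exp (I * y * t) =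
      ((Real.sqrt (2 * Real.pi) * Real.exp (-t ^ 2 / 2) : ℝ) : ℂ) := by
  have h := fourierIntegral_gaussian (b := (1/2 : ℂ)) (by norm_num) (t : ℂ)
  calc ∫ y : ℝ, (Real.exp (-y ^ 2 / 2) : ℂ) * Complex.exp (I * y * t)
      = ∫ y : ℝ, cexp (I * (t : ℂ) * (y : ℝ)) * cexp (-(1/2 : ℂ) * (y : ℝ) ^ 2) := by
        congr 1
        funext y
        rw [Complex.ofReal_exp, ← Complex.exp_add, ← Complex.exp_add]
        congr 1
        push_cast
        ring
    _ = ((Real.pi : ℂ) / (1/2)) ^ (1/2 : ℂ) * cexp (-(t : ℂ) ^ 2 / (4 * (1/2))) := h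
    _ = ((Real.sqrt (2 * Real.pi) * Real.exp (-t ^ 2 / 2) : ℝ) : ℂ) := by
        have h1 : ((Real.pi : ℂ) / (1/2)) = ((2 * Real.pi : ℝ) : ℂ) := by push_cast; ring
        have h2 : ((2 * Real.pi : ℝ) : ℂ) ^ (1/2 : ℂ) = ((Real.sqrt (2 * Real.pi) : ℝ) : ℂ) := by
          rw [show (1/2 : ℂ) = ((1/2 : ℝ) : ℂ) by norm_num,
            ← Complex.ofReal_cpow (by positivity), Real.sqrt_eq_rpow]
        rw [h1, h2, show -(t : ℂ) ^ 2 / (4 * (1/2)) = ((-t ^ 2 / 2 : ℝ) : ℂ) by push_cast; ring,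
          ← Complex.ofReal_exp, ← Complex.ofReal_mul]

lemma integrable_expNegSq : Integrable fun t : ℝ => Real.exp (-t ^ 2) := by
  have := integrable_exp_neg_mul_sq (b := 1) one_pos
  simpa using this

lemma integral_Ioi_expNegSq (x : ℝ) :
    ∫ t in Set.Ioi x, Real.exp (-t ^ 2) = Real.sqrt Real.pi / 2 * erfc x := by
  rw [erfc]
  have hpi : Real.sqrt Real.pi ≠ 0 := by positivity
  field_simp

lemma erfc_nonneg (x : ℝ) : 0 ≤ erfc x := by
  rw [erfc]
  apply mul_nonneg (by positivity)
  apply setIntegral_nonneg measurableSet_Ioi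
  intro t _
  positivity

lemma erfc_antitone : Antitone erfc := by
  intro x y hxy
  rw [erfc, erfc]
  apply mul_le_mul_of_nonneg_left _ (by positivity)
  apply setIntegral_mono_set integrable_expNegSq.integrableOn
  · filter_upwards with t using by positivity
  · exact (Set.Ioi_subset_Ioi hxy).eventuallyLE

lemma tail_eq (k x : ℝ) (hk : 0 < k) :
    ∫ q in Set.Ioi x, Real.exp (-(k * q) ^ 2) =
      k⁻¹ * (Real.sqrt Real.pi / 2 * erfc (k * x)) := by
  have h := integral_comp_mul_left_Ioi (fun t => Real.exp (-t ^ 2)) x hk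
  simp only [smul_eq_mul] at h
  rw [h, integral_Ioi_expNegSq]

lemma smul_diagOp (v : OrthonormalBasis (Fin N) ℂ (EuclideanSpace ℂ (Fin N))) (r : ℝ)
    (c : Fin N → ℂ) : r • diagOp v c = diagOp v (fun n => (r : ℂ) * c n) := by
  simp [diagOp, Finset.smul_sum, ← smul_assoc, Complex.real_smul]

lemma diagOp_sub (v : OrthonormalBasis (Fin N) ℂ (EuclideanSpace ℂ (Fin N)))
    (c d : Fin N → ℂ) : diagOp v c - diagOp v d = diagOp v (fun n => c n - d n) := by
  simp [diagOp, sub_smul, Finset.sum_sub_distrib]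

lemma integrable_diag (v : OrthonormalBasis (Fin N) ℂ (EuclideanSpace ℂ (Fin N)))
    (μ : Measure ℝ) (c : ℝ → Fin N → ℂ) (hc : ∀ n, Integrable (fun y => c y n) μ) :
    Integrable (fun y => diagOp v (c y)) μ := by
  simp only [diagOp]
  exact integrable_finset_sum (f := fun n y => c y n • ((innerSL ℂ (v n)).smulRight (v n))) _
    fun n _ => (hc n).smul_const _

lemma integral_diag (v : OrthonormalBasis (Fin N) ℂ (EuclideanSpace ℂ (Fin N)))
    (μ : Measure ℝ) (c : ℝ → Fin N → ℂ) (hc : ∀ n, Integrable (fun y => c y n) μ) :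
    ∫ y, diagOp v (c y) ∂μ = diagOp v (fun n => ∫ y, c y n ∂μ) := by
  simp only [diagOp]
  rw [integral_finset_sum _ fun n _ => (hc n).smul_const _]
  congr 1
  funext n
  exact integral_smul_const _ _

lemma continuous_diagOp (v : OrthonormalBasis (Fin N) ℂ (EuclideanSpace ℂ (Fin N)))
    (c : ℝ → Fin N → ℂ) (hc : ∀ n, Continuous fun q => c q n) :
    Continuous fun q => diagOp v (c q) := by
  simp only [diagOp]
  exact continuous_finset_sum _ fun n _ => (hc n).smul continuous_const

lemma norm_c_eq (y t : ℝ) :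
    ‖(Real.exp (-y ^ 2 / 2) : ℂ) * Complex.exp (I * y * t)‖ = Real.exp (-y ^ 2 / 2) := by
  rw [norm_mul, show (I : ℂ) * y * t = ((y * t : ℝ) : ℂ) * I by push_cast; ring]
  rw [Complex.norm_real, Real.norm_eq_abs,
    Complex.norm_exp_ofReal_mul_I, abs_of_pos (Real.exp_pos _), mul_one]

lemma integrable_gauss_real : Integrable fun y : ℝ => Real.exp (-y ^ 2 / 2) := by
  have h := integrable_exp_neg_mul_sq (b := (1/2 : ℝ)) (by norm_num)
  have heq : (fun y : ℝ => Real.exp (-(1/2) * y ^ 2)) = fun y : ℝ => Real.exp (-y ^ 2 / 2) := by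
    funext y; ring_nf
  rwa [heq] at h

lemma sqrt_two_le_two : Real.sqrt 2 ≤ 2 := by
  nlinarith [Real.sq_sqrt (show (0:ℝ) ≤ 2 by norm_num), Real.sqrt_nonneg 2]

/-- Tail bound for truncating the two-dimensional Gaussian-kernel integral
representation of the resolvent to `[0, qmax] × [-ymax, ymax]`. -/
theorem stmt19 {N : ℕ} [NeZero N] (A : Op N)
    (v : OrthonormalBasis (Fin N) ℂ (EuclideanSpace ℂ (Fin N))) (E : Fin N → ℝ)
    (hv : ∀ n, A (v n) = (E n : ℂ) • v n)
    (a am qmax ymax : ℝ) (ham : am = ⨅ n : Fin N, |a - E n|) (ham0 : 0 < am)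
    (hq : 0 < qmax) (hy : 0 < ymax) :
    ‖((1 / Real.pi : ℝ) • ∫ q in Set.Ioi (0 : ℝ), ∫ y : ℝ,
          Real.exp (-y ^ 2 / 2) •
            NormedSpace.exp ((I * y * q) • ((a : ℂ) • (1 : Op N) - A))) -
        (1 / Real.pi : ℝ) • ∫ q in Set.Ioc (0 : ℝ) qmax, ∫ y in Set.Ioc (-ymax) ymax,
          Real.exp (-y ^ 2 / 2) •
            NormedSpace.exp ((I * y * q) • ((a : ℂ) • (1 : Op N) - A))‖ ≤
      (1 / am) * erfc (am * qmax / 2) +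
        (Real.sqrt 2 * qmax / Real.sqrt Real.pi) * erfc (ymax / Real.sqrt 2) := by
  have hπ := Real.pi_pos
  set B : Op N := (a : ℂ) • (1 : Op N) - A with hB
  set c : ℝ → ℝ → Fin N → ℂ := fun q y n =>
    (Real.exp (-y ^ 2 / 2) : ℂ) * Complex.exp (I * y * q * ((a : ℝ) - E n)) with hc
  -- integrand as diagonal operator
  have hfd : ∀ q y : ℝ, Real.exp (-y ^ 2 / 2) • NormedSpace.exp ((I * y * q) • B) =
      diagOp v (c q y) := by
    intro q y
    rw [exp_eq_diag v A E hv a (I * y * q), smul_diagOp]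
  -- scalar integrability
  have hint : ∀ q n, Integrable fun y : ℝ => c q y n := by
    intro q n
    have h := integrable_gauss_mul (q * (a - E n))
    apply h.congr (Filter.Eventually.of_forall fun y => ?_)
    simp only [hc]
    congr 1
    push_cast
    ring
  -- the inner-integral coefficient functions
  set d : ℝ → Fin N → ℂ := fun q n => ∫ y : ℝ, c q y n with hd
  set e : ℝ → Fin N → ℂ := fun q n => ∫ y in Set.Ioc (-ymax) ymax, c q y n with he
  have hd_eq : ∀ q n, d q n =
      ((Real.sqrt (2 * Real.pi) * Real.exp (-(q * (a - E n)) ^ 2 / 2) : ℝ) : ℂ) := by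
    intro q n
    calc d q n = ∫ y : ℝ, (Real.exp (-y ^ 2 / 2) : ℂ) *
          Complex.exp (I * y * ((q * (a - E n) : ℝ) : ℂ)) := by
          simp only [hd]
          apply integral_congr_ae
          filter_upwards with y
          simp only [hc]
          congr 1
          push_cast
          ring
      _ = _ := by exact gauss_scalar (q * (a - E n))
  -- inner integrals as diagonal ops
  have hFq : ∀ q : ℝ, (∫ y : ℝ, Real.exp (-y ^ 2 / 2) • NormedSpace.exp ((I * y * q) • B)) =
      diagOp v (d q) := by
    intro q
    simp_rw [hfd q]
    exact integral_diag v volume (c q) (hint q)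
  have hGq : ∀ q : ℝ, (∫ y in Set.Ioc (-ymax) ymax,
      Real.exp (-y ^ 2 / 2) • NormedSpace.exp ((I * y * q) • B)) = diagOp v (e q) := by
    intro q
    simp_rw [hfd q]
    exact integral_diag v _ (c q) (fun n => (hint q n).integrableOn)
  -- norm of entries of c
  have hnormc : ∀ q y n, ‖c q y n‖ = Real.exp (-y ^ 2 / 2) := by
    intro q y n
    have hrw : c q y n = (Real.exp (-y ^ 2 / 2) : ℂ) *
        Complex.exp (I * y * ((q * (a - E n) : ℝ) : ℂ)) := by
      simp only [hc]; congr 1; push_cast; ring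
    rw [hrw, norm_c_eq]
  have ham_le : ∀ n, am ≤ |a - E n| := by
    intro n
    rw [ham]
    exact ciInf_le (Finite.bddBelow_range _) n
  have hgR : Integrable (fun y : ℝ => Real.exp (-y ^ 2 / 2)) := integrable_gauss_real
  -- pointwise bound for the fully-integrated diagonal operator
  set g : ℝ → ℝ := fun q => Real.sqrt (2 * Real.pi) * Real.exp (-(am ^ 2 / 2) * q ^ 2) with hg
  have hnormd : ∀ q, ‖diagOp v (d q)‖ ≤ g q := by
    intro q
    apply diagOp_norm_le v _ (by positivity)
    intro n
    rw [hd_eq]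
    rw [Complex.norm_real, Real.norm_eq_abs, _root_.abs_of_nonneg (by positivity)]
    simp only [hg]
    have h1 : am ^ 2 ≤ (a - E n) ^ 2 := by
      nlinarith [ham_le n, abs_nonneg (a - E n), _root_.sq_abs (a - E n)]
    have h2 : -(q * (a - E n)) ^ 2 / 2 ≤ -(am ^ 2 / 2) * q ^ 2 := by
      nlinarith [mul_le_mul_of_nonneg_left h1 (sq_nonneg q)]
    exact mul_le_mul_of_nonneg_left (Real.exp_le_exp.mpr h2) (Real.sqrt_nonneg _)
  have hg_int : Integrable g := by
    have h := (integrable_exp_neg_mul_sq (b := am ^ 2 / 2) (by positivity)).const_mul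
      (Real.sqrt (2 * Real.pi))
    exact h
  have hd_cont : Continuous fun q => diagOp v (d q) := by
    apply continuous_diagOp
    intro n
    have hfe : (fun q => d q n) = fun q =>
        ((Real.sqrt (2 * Real.pi) * Real.exp (-(q * (a - E n)) ^ 2 / 2) : ℝ) : ℂ) :=
      funext fun q => hd_eq q n
    rw [hfe]
    exact Complex.continuous_ofReal.comp (by continuity)
  have hd_intR : Integrable fun q => diagOp v (d q) :=
    Integrable.mono' hg_int hd_cont.aestronglyMeasurable (Filter.Eventually.of_forall hnormd)
  -- continuity and bound for the truncated diagonal operator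
  have he_cont : ∀ n, Continuous fun q => e q n := by
    intro n
    simp only [he]
    apply continuous_of_dominated (bound := fun y : ℝ => Real.exp (-y ^ 2 / 2))
    · exact fun q => (hint q n).aestronglyMeasurable.restrict
    · intro q
      filter_upwards with y
      rw [hnormc]
    · exact hgR.integrableOn
    · filter_upwards with y
      simp only [hc]
      fun_prop
  have he_contd : Continuous fun q => diagOp v (e q) := continuous_diagOp v _ he_cont
  have he_intOn : IntegrableOn (fun q => diagOp v (e q)) (Set.Ioc 0 qmax) := by
    have hconst : IntegrableOn (fun _ : ℝ => ∫ y : ℝ, Real.exp (-y ^ 2 / 2))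
        (Set.Ioc (0:ℝ) qmax) := integrableOn_const measure_Ioc_lt_top.ne
    apply Integrable.mono' hconst he_contd.aestronglyMeasurable.restrict
    filter_upwards with q
    apply diagOp_norm_le v _ (integral_nonneg fun y => (Real.exp_pos _).le)
    intro n
    simp only [he]
    calc ‖∫ y in Set.Ioc (-ymax) ymax, c q y n‖
        ≤ ∫ y in Set.Ioc (-ymax) ymax, ‖c q y n‖ := norm_integral_le_integral_norm _
      _ = ∫ y in Set.Ioc (-ymax) ymax, Real.exp (-y ^ 2 / 2) := by
          apply integral_congr_ae
          filter_upwards with y using hnormc q y n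
      _ ≤ ∫ y : ℝ, Real.exp (-y ^ 2 / 2) :=
          setIntegral_le_integral hgR (by filter_upwards with y using (Real.exp_pos _).le)
  -- y-tail
  set tY : ℝ := ∫ y in (Set.Ioc (-ymax) ymax)ᶜ, Real.exp (-y ^ 2 / 2) with htY
  have htY0 : 0 ≤ tY := by
    rw [htY]
    exact setIntegral_nonneg measurableSet_Ioc.compl fun y _ => (Real.exp_pos _).le
  have hsub : ∀ q, ‖diagOp v (d q) - diagOp v (e q)‖ ≤ tY := by
    intro q
    rw [diagOp_sub]
    apply diagOp_norm_le v _ htY0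
    intro n
    have hsplit := integral_add_compl
      (measurableSet_Ioc : MeasurableSet (Set.Ioc (-ymax) ymax)) (hint q n)
    have hde : d q n - e q n = ∫ y in (Set.Ioc (-ymax) ymax)ᶜ, c q y n := by
      simp only [hd, he]
      rw [← hsplit]
      ring
    rw [hde]
    calc ‖∫ y in (Set.Ioc (-ymax) ymax)ᶜ, c q y n‖
        ≤ ∫ y in (Set.Ioc (-ymax) ymax)ᶜ, ‖c q y n‖ := norm_integral_le_integral_norm _
      _ = tY := by
          rw [htY]
          apply integral_congr_ae
          filter_upwards with y using hnormc q y n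
  -- value of the y-tail
  have h2sq : Real.sqrt 2 ^ 2 = 2 := Real.sq_sqrt (by norm_num)
  have htY_eq : tY = Real.sqrt 2 * Real.sqrt Real.pi * erfc (ymax / Real.sqrt 2) := by
    have hcompl : (Set.Ioc (-ymax) ymax)ᶜ = Set.Iic (-ymax) ∪ Set.Ioi ymax := by
      ext t
      simp only [Set.mem_compl_iff, Set.mem_Ioc, not_and_or, not_lt, not_le, Set.mem_union,
        Set.mem_Iic, Set.mem_Ioi]
    have hIoi : (∫ y in Set.Ioi ymax, Real.exp (-y ^ 2 / 2))
        = Real.sqrt 2 * (Real.sqrt Real.pi / 2 * erfc (ymax / Real.sqrt 2)) := by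
      have hk : (0:ℝ) < (Real.sqrt 2)⁻¹ := by positivity
      have hexp : ∀ y : ℝ, Real.exp (-((Real.sqrt 2)⁻¹ * y) ^ 2) = Real.exp (-y ^ 2 / 2) := by
        intro y
        congr 1
        rw [mul_pow, inv_pow, h2sq]
        ring
      calc (∫ y in Set.Ioi ymax, Real.exp (-y ^ 2 / 2))
          = ∫ y in Set.Ioi ymax, Real.exp (-((Real.sqrt 2)⁻¹ * y) ^ 2) := by
            apply setIntegral_congr_ae measurableSet_Ioi
            filter_upwards with y _ using (hexp y).symm
        _ = ((Real.sqrt 2)⁻¹)⁻¹ *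
            (Real.sqrt Real.pi / 2 * erfc ((Real.sqrt 2)⁻¹ * ymax)) := tail_eq _ _ hk
        _ = Real.sqrt 2 * (Real.sqrt Real.pi / 2 * erfc (ymax / Real.sqrt 2)) := by
            rw [inv_inv, inv_mul_eq_div]
    have hIic : (∫ y in Set.Iic (-ymax), Real.exp (-y ^ 2 / 2))
        = ∫ y in Set.Ioi ymax, Real.exp (-y ^ 2 / 2) := by
      have h := integral_comp_neg_Iic (-ymax) (fun y => Real.exp (-y ^ 2 / 2))
      simp only [neg_sq, neg_neg] at h
      exact h
    rw [htY, hcompl, setIntegral_union (Set.Iic_disjoint_Ioi (by linarith)) measurableSet_Ioi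
      hgR.integrableOn hgR.integrableOn, hIic, hIoi]
    ring
  -- value of the q-tail
  have hIq : (∫ q in Set.Ioi qmax, g q) = Real.sqrt (2 * Real.pi) *
      ((Real.sqrt 2 / am) * (Real.sqrt Real.pi / 2 *
        erfc (am * (Real.sqrt 2)⁻¹ * qmax))) := by
    simp only [hg]
    rw [integral_const_mul]
    congr 1
    have hk : (0:ℝ) < am * (Real.sqrt 2)⁻¹ := by positivity
    have hexp : ∀ q : ℝ, Real.exp (-(am * (Real.sqrt 2)⁻¹ * q) ^ 2)
        = Real.exp (-(am ^ 2 / 2) * q ^ 2) := by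
      intro q
      congr 1
      rw [mul_pow, mul_pow, inv_pow, h2sq]
      ring
    calc (∫ q in Set.Ioi qmax, Real.exp (-(am ^ 2 / 2) * q ^ 2))
        = ∫ q in Set.Ioi qmax, Real.exp (-(am * (Real.sqrt 2)⁻¹ * q) ^ 2) := by
          apply setIntegral_congr_ae measurableSet_Ioi
          filter_upwards with q _ using (hexp q).symm
      _ = (am * (Real.sqrt 2)⁻¹)⁻¹ * (Real.sqrt Real.pi / 2 *
          erfc (am * (Real.sqrt 2)⁻¹ * qmax)) := tail_eq _ _ hk
      _ = (Real.sqrt 2 / am) * (Real.sqrt Real.pi / 2 *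
          erfc (am * (Real.sqrt 2)⁻¹ * qmax)) := by
          rw [mul_inv, inv_inv]
          ring
  -- split the q-integral
  have hsplitq : (∫ q in Set.Ioi (0:ℝ), diagOp v (d q)) =
      (∫ q in Set.Ioc (0:ℝ) qmax, diagOp v (d q)) + ∫ q in Set.Ioi qmax, diagOp v (d q) := by
    rw [← setIntegral_union (Set.Ioc_disjoint_Ioi le_rfl) measurableSet_Ioi
      hd_intR.integrableOn hd_intR.integrableOn, Set.Ioc_union_Ioi_eq_Ioi hq.le]
  -- rewrite the goal
  simp_rw [hFq, hGq]
  rw [hsplitq]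
  have key : (1/Real.pi : ℝ) • ((∫ q in Set.Ioc (0:ℝ) qmax, diagOp v (d q)) +
        ∫ q in Set.Ioi qmax, diagOp v (d q)) -
      (1/Real.pi : ℝ) • ∫ q in Set.Ioc (0:ℝ) qmax, diagOp v (e q) =
      (1/Real.pi : ℝ) • (∫ q in Set.Ioi qmax, diagOp v (d q)) +
      (1/Real.pi : ℝ) • ((∫ q in Set.Ioc (0:ℝ) qmax, diagOp v (d q)) -
        ∫ q in Set.Ioc (0:ℝ) qmax, diagOp v (e q)) := by
    module
  rw [key]
  have hb1 : ‖∫ q in Set.Ioi qmax, diagOp v (d q)‖ ≤ ∫ q in Set.Ioi qmax, g q :=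
    norm_integral_le_of_norm_le hg_int.integrableOn
      (Filter.Eventually.of_forall fun q => hnormd q)
  have hb2 : ‖(∫ q in Set.Ioc (0:ℝ) qmax, diagOp v (d q)) -
      ∫ q in Set.Ioc (0:ℝ) qmax, diagOp v (e q)‖ ≤ qmax * tY := by
    rw [← integral_sub hd_intR.integrableOn he_intOn]
    calc ‖∫ q in Set.Ioc (0:ℝ) qmax, (diagOp v (d q) - diagOp v (e q))‖
        ≤ ∫ _q in Set.Ioc (0:ℝ) qmax, tY :=
          norm_integral_le_of_norm_le (integrableOn_const measure_Ioc_lt_top.ne)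
            (Filter.Eventually.of_forall fun q => hsub q)
      _ = qmax * tY := by
          rw [setIntegral_const, measureReal_def, Real.volume_Ioc, smul_eq_mul,
            ENNReal.toReal_ofReal (by linarith)]
          ring
  have hπnorm : ‖(1/Real.pi : ℝ)‖ = 1/Real.pi := by
    rw [Real.norm_eq_abs, abs_of_pos (by positivity)]
  have hstep : ‖(1/Real.pi : ℝ) • (∫ q in Set.Ioi qmax, diagOp v (d q)) +
      (1/Real.pi : ℝ) • ((∫ q in Set.Ioc (0:ℝ) qmax, diagOp v (d q)) -
        ∫ q in Set.Ioc (0:ℝ) qmax, diagOp v (e q))‖ ≤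
      (1/Real.pi) * (∫ q in Set.Ioi qmax, g q) + (1/Real.pi) * (qmax * tY) := by
    have h1 : (0:ℝ) ≤ 1/Real.pi := by positivity
    refine le_trans (norm_add_le _ _) (le_trans (add_le_add
      (ContinuousLinearMap.opNorm_smul_le _ _) (ContinuousLinearMap.opNorm_smul_le _ _)) ?_)
    rw [hπnorm]
    exact add_le_add (mul_le_mul_of_nonneg_left hb1 h1) (mul_le_mul_of_nonneg_left hb2 h1)
  refine le_trans hstep ?_
  -- final arithmetic
  have hs2 : Real.sqrt (2*Real.pi) = Real.sqrt 2 * Real.sqrt Real.pi :=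
    Real.sqrt_mul (by norm_num) _
  have h22 : Real.sqrt 2 * Real.sqrt 2 = 2 := Real.mul_self_sqrt (by norm_num)
  have hpp : Real.sqrt Real.pi * Real.sqrt Real.pi = Real.pi := Real.mul_self_sqrt hπ.le
  have hterm1 : (1/Real.pi) * (∫ q in Set.Ioi qmax, g q) ≤ (1/am) * erfc (am * qmax / 2) := by
    rw [hIq]
    have heq : (1/Real.pi) * (Real.sqrt (2*Real.pi) * ((Real.sqrt 2 / am) *
        (Real.sqrt Real.pi / 2 * erfc (am * (Real.sqrt 2)⁻¹ * qmax)))) =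
        (1/am) * erfc (am * (Real.sqrt 2)⁻¹ * qmax) := by
      rw [hs2]
      have hrw : (1/Real.pi) * ((Real.sqrt 2 * Real.sqrt Real.pi) * ((Real.sqrt 2 / am) *
          (Real.sqrt Real.pi / 2 * erfc (am * (Real.sqrt 2)⁻¹ * qmax)))) =
          ((Real.sqrt 2 * Real.sqrt 2) * (Real.sqrt Real.pi * Real.sqrt Real.pi)) *
            erfc (am * (Real.sqrt 2)⁻¹ * qmax) / (2 * Real.pi * am) := by
        ring
      rw [hrw, h22, hpp]
      field_simp
    rw [heq]
    refine mul_le_mul_of_nonneg_left ?_ (le_of_lt (one_div_pos.mpr ham0))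
    apply erfc_antitone
    have hs2pos : (0:ℝ) < Real.sqrt 2 := by positivity
    have harg : am * (Real.sqrt 2)⁻¹ * qmax = am * qmax / Real.sqrt 2 := by ring
    rw [harg, div_le_div_iff₀ (by norm_num) hs2pos]
    nlinarith [sqrt_two_le_two, mul_nonneg ham0.le hq.le]
  have hterm2 : (1/Real.pi) * (qmax * tY) =
      (Real.sqrt 2 * qmax / Real.sqrt Real.pi) * erfc (ymax / Real.sqrt 2) := by
    rw [htY_eq]
    rw [show (1/Real.pi) * (qmax * (Real.sqrt 2 * Real.sqrt Real.pi *
        erfc (ymax / Real.sqrt 2))) = Real.sqrt 2 * qmax * Real.sqrt Real.pi *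
        erfc (ymax / Real.sqrt 2) / Real.pi by ring, ← hpp]
    have hppos : (0:ℝ) < Real.sqrt Real.pi := by positivity
    rw [Real.sqrt_mul_self hppos.le]
    field_simp
  linarith [hterm1, hterm2.le]
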